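/- For the path P_n (n ≥ 2), the open 0-monopoly number is M_0(P_n) = n/2 if n ≡ 0 (mod 4), (n+2)/2 if n ≡ 2 (mod 4), and (n+1)/2 if n is odd. -/
import Mathlib


open Finset

attribute [local instance] Classical.propDecidable

/-- Number of neighbors of `v` inside `S`. -/
def degIn {V : Type*} [Fintype V] [DecidableEq V] (G : SimpleGraph V) [DecidableRel G.Adj]
    (S : Finset V) (v : V) : ℕ := (G.neighborFinset v ∩ S).card

/-- `M` is an open `k`-monopoly: `δ_M(v) ≥ δ(v)/2 + k` for every vertex `v`. -/
def IsKMonopoly {V : Type*} [Fintype V] [DecidableEq V] (G : SimpleGraph V) [DecidableRel G.Adj]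
    (k : ℤ) (M : Finset V) : Prop :=
  M.Nonempty ∧ ∀ v : V, ((degIn G M v : ℚ)) ≥ (G.degree v : ℚ) / 2 + (k : ℚ)

/-- The open `k`-monopoly number: minimum cardinality of an open `k`-monopoly. -/
noncomputable def monopolyNumber {V : Type*} [Fintype V] [DecidableEq V] (G : SimpleGraph V)
    [DecidableRel G.Adj] (k : ℤ) : ℕ :=
  sInf {n : ℕ | ∃ M : Finset V, IsKMonopoly G k M ∧ M.card = n}

section Aux
open SimpleGraph
variable {n : ℕ}

lemma degIn_eq {V : Type*} [Fintype V] [DecidableEq V] (G : SimpleGraph V) [DecidableRel G.Adj]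
    (M : Finset V) (v : V) : degIn G M v = ∑ m ∈ M, if G.Adj v m then 1 else 0 := by
  rw [degIn, ← Finset.card_filter]
  congr 1
  ext u
  simp [mem_neighborFinset, and_comm]

lemma sum_degIn {V : Type*} [Fintype V] [DecidableEq V] (G : SimpleGraph V) [DecidableRel G.Adj]
    (M : Finset V) : ∑ v : V, degIn G M v = ∑ m ∈ M, G.degree m := by
  simp_rw [degIn_eq]
  rw [Finset.sum_comm]
  apply Finset.sum_congr rfl
  intro m _
  rw [← SimpleGraph.card_neighborFinset_eq_degree, neighborFinset_eq_filter, Finset.card_filter]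
  apply Finset.sum_congr rfl
  intro v _
  simp [adj_comm]


lemma mem_nbhd [DecidableRel (pathGraph n).Adj] (v u : Fin n) :
    u ∈ (pathGraph n).neighborFinset v ↔ (v.val + 1 = u.val ∨ u.val + 1 = v.val) := by
  rw [mem_neighborFinset, pathGraph_adj]

lemma nbhd_left [DecidableRel (pathGraph n).Adj] (hn : 2 ≤ n) :
    (pathGraph n).neighborFinset ⟨0, by omega⟩ = {⟨1, by omega⟩} := by
  ext u
  simp only [mem_nbhd, Finset.mem_singleton, Finset.mem_insert, Fin.ext_iff]
  omega

lemma nbhd_right [DecidableRel (pathGraph n).Adj] (hn : 2 ≤ n) :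
    (pathGraph n).neighborFinset ⟨n-1, by omega⟩ = {⟨n-2, by omega⟩} := by
  ext u
  simp only [mem_nbhd, Finset.mem_singleton, Finset.mem_insert, Fin.ext_iff]
  omega

lemma nbhd_mid [DecidableRel (pathGraph n).Adj] {i : ℕ} (h1 : 1 ≤ i) (h2 : i ≤ n - 2) (hn : 2 ≤ n) :
    (pathGraph n).neighborFinset ⟨i, by omega⟩ = {⟨i-1, by omega⟩, ⟨i+1, by omega⟩} := by
  ext u
  simp only [mem_nbhd, Finset.mem_singleton, Finset.mem_insert, Fin.ext_iff]
  omega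

lemma deg_left [DecidableRel (pathGraph n).Adj] (hn : 2 ≤ n) :
    (pathGraph n).degree ⟨0, by omega⟩ = 1 := by
  rw [← SimpleGraph.card_neighborFinset_eq_degree, nbhd_left hn, Finset.card_singleton]

lemma deg_right [DecidableRel (pathGraph n).Adj] (hn : 2 ≤ n) :
    (pathGraph n).degree ⟨n-1, by omega⟩ = 1 := by
  rw [← SimpleGraph.card_neighborFinset_eq_degree, nbhd_right hn, Finset.card_singleton]

lemma deg_le [DecidableRel (pathGraph n).Adj] (v : Fin n) : (pathGraph n).degree v ≤ 2 := by
  rw [← SimpleGraph.card_neighborFinset_eq_degree]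
  have hsub : (pathGraph n).neighborFinset v ⊆ (Finset.univ.filter (fun u : Fin n => v.val + 1 = u.val)) ∪ (Finset.univ.filter (fun u : Fin n => u.val + 1 = v.val)) := by
    intro u hu
    rw [mem_nbhd] at hu
    simp [hu]
  calc ((pathGraph n).neighborFinset v).card ≤ _ := Finset.card_le_card hsub
    _ ≤ _ + _ := Finset.card_union_le _ _
    _ ≤ 2 := by
        have h1 : (Finset.univ.filter (fun u : Fin n => v.val + 1 = u.val)).card ≤ 1 :=
          Finset.card_le_one.mpr (by intro a ha b hb; simp at ha hb; exact Fin.ext (by omega))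
        have h2 : (Finset.univ.filter (fun u : Fin n => u.val + 1 = v.val)).card ≤ 1 :=
          Finset.card_le_one.mpr (by intro a ha b hb; simp at ha hb; exact Fin.ext (by omega))
        omega

lemma deg_pos [DecidableRel (pathGraph n).Adj] (hn : 2 ≤ n) (v : Fin n) :
    1 ≤ (pathGraph n).degree v := by
  rw [← SimpleGraph.card_neighborFinset_eq_degree, Nat.succ_le_iff, Finset.card_pos]
  rcases Nat.lt_or_ge (v.val + 1) n with h | h
  · exact ⟨⟨v.val + 1, h⟩, by rw [mem_nbhd]; exact Or.inl rfl⟩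
  · exact ⟨⟨v.val - 1, by omega⟩, by rw [mem_nbhd]; right; show v.val - 1 + 1 = v.val; omega⟩
variable {n : ℕ}

lemma mono_iff [DecidableRel (pathGraph n).Adj] (hn : 2 ≤ n) (M : Finset (Fin n)) :
    IsKMonopoly (pathGraph n) 0 M ↔ ∀ v : Fin n, 1 ≤ degIn (pathGraph n) M v := by
  constructor
  · rintro ⟨-, h⟩ v
    have h1 := h v
    have h2 := deg_pos hn v
    by_contra hc
    have h0 : degIn (pathGraph n) M v = 0 := by omega
    rw [h0] at h1
    have : (1 : ℚ) ≤ (pathGraph n).degree v := by exact_mod_cast h2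
    push_cast at h1
    linarith
  · intro h
    constructor
    · have h1 := h ⟨0, by omega⟩
      have : ((pathGraph n).neighborFinset ⟨0, by omega⟩ ∩ M).Nonempty := by
        rw [← Finset.card_pos]; exact h1
      obtain ⟨u, hu⟩ := this
      exact ⟨u, (Finset.mem_inter.mp hu).2⟩
    · intro v
      have h1 := h v
      have h2 := deg_le v
      have : ((pathGraph n).degree v : ℚ) ≤ 2 := by exact_mod_cast h2
      have : (1 : ℚ) ≤ (degIn (pathGraph n) M v : ℚ) := by exact_mod_cast h1
      push_cast
      linarith

lemma lb1 [DecidableRel (pathGraph n).Adj] (hn : 2 ≤ n) (M : Finset (Fin n))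
    (hM : IsKMonopoly (pathGraph n) 0 M) : n ≤ 2 * M.card := by
  have h := (mono_iff hn M).mp hM
  have h1 : n ≤ ∑ v : Fin n, degIn (pathGraph n) M v := by
    calc n = ∑ _v : Fin n, 1 := by simp
    _ ≤ _ := Finset.sum_le_sum (fun v _ => h v)
  have h2 : ∑ v : Fin n, degIn (pathGraph n) M v = ∑ m ∈ M, (pathGraph n).degree m :=
    sum_degIn _ M
  have h3 : ∑ m ∈ M, (pathGraph n).degree m ≤ 2 * M.card := by
    calc ∑ m ∈ M, (pathGraph n).degree m ≤ ∑ _m ∈ M, 2 := Finset.sum_le_sum (fun m _ => deg_le m)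
    _ = 2 * M.card := by rw [Finset.sum_const]; ring
  omega
lemma pair_count {α : Type*} [DecidableEq α] {a b : α} (hab : a ≠ b) (M : Finset α) :
    ({a, b} ∩ M).card = (if a ∈ M then 1 else 0) + (if b ∈ M then 1 else 0) := by
  rw [← Finset.filter_mem_eq_inter, Finset.card_filter, Finset.sum_pair hab]

lemma singleton_count {α : Type*} [DecidableEq α] (a : α) (M : Finset α) :
    ({a} ∩ M).card = (if a ∈ M then 1 else 0) := by
  rw [← Finset.filter_mem_eq_inter, Finset.card_filter, Finset.sum_singleton]

lemma lb2 [DecidableRel (pathGraph n).Adj] (hn : 2 ≤ n) (hn4 : n % 4 = 2)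
    (M : Finset (Fin n)) (hM : IsKMonopoly (pathGraph n) 0 M) : n / 2 + 1 ≤ M.card := by
  by_contra hcon
  have hcard : 2 * M.card = n := by have := lb1 hn M hM; omega
  have h := (mono_iff hn M).mp hM
  have hsum : ∑ v : Fin n, degIn (pathGraph n) M v = ∑ m ∈ M, (pathGraph n).degree m :=
    sum_degIn _ M
  have hub : ∑ m ∈ M, (pathGraph n).degree m ≤ 2 * M.card := by
    calc ∑ m ∈ M, (pathGraph n).degree m ≤ ∑ _m ∈ M, 2 := Finset.sum_le_sum (fun m _ => deg_le m)
    _ = 2 * M.card := by rw [Finset.sum_const]; ring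
  have hlbs : n ≤ ∑ v : Fin n, degIn (pathGraph n) M v := by
    calc n = ∑ _v : Fin n, 1 := by simp
    _ ≤ _ := Finset.sum_le_sum (fun v _ => h v)
  have htot : ∑ v : Fin n, degIn (pathGraph n) M v = n := by omega
  have hone : ∀ v : Fin n, degIn (pathGraph n) M v = 1 := by
    by_contra hc
    push_neg at hc
    obtain ⟨v, hv⟩ := hc
    have hlt : ∑ _v : Fin n, 1 < ∑ v : Fin n, degIn (pathGraph n) M v := by
      apply Finset.sum_lt_sum (fun i _ => h i) ⟨v, Finset.mem_univ v, by have := h v; omega⟩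
    simp [htot] at hlt
  have hdeg : ∀ m ∈ M, (pathGraph n).degree m = 2 := by
    by_contra hc
    push_neg at hc
    obtain ⟨m, hm, hm2⟩ := hc
    have hlt : ∑ m ∈ M, (pathGraph n).degree m < ∑ _m ∈ M, 2 := by
      apply Finset.sum_lt_sum (fun i _ => deg_le i) ⟨m, hm, by have := deg_le m; omega⟩
    rw [Finset.sum_const, smul_eq_mul, mul_comm] at hlt
    omega
  -- membership predicate on ℕ
  set xM : ℕ → Prop := fun i => ∃ h : i < n, (⟨i, h⟩ : Fin n) ∈ M with hxM
  have hlast : ¬ xM (n - 1) := by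
    rintro ⟨hlt, hmem⟩
    have := hdeg _ hmem
    rw [deg_right hn] at this
    omega
  have x1 : xM 1 := by
    have h1 : ({(⟨1, by omega⟩ : Fin n)} ∩ M).card = 1 := by
      have h0 := hone ⟨0, by omega⟩
      rwa [degIn, nbhd_left hn] at h0
    rw [singleton_count] at h1
    refine ⟨by omega, ?_⟩
    by_contra hx
    simp [hx] at h1
  have hstep : ∀ i : ℕ, 1 ≤ i → i + 2 ≤ n → (xM (i - 1) ↔ ¬ xM (i + 1)) := by
    intro i h1 h2
    have hne : (⟨i - 1, by omega⟩ : Fin n) ≠ ⟨i + 1, by omega⟩ := by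
      simp only [ne_eq, Fin.ext_iff]; omega
    have hc : ({(⟨i - 1, by omega⟩ : Fin n), ⟨i + 1, by omega⟩} ∩ M).card = 1 := by
      have h0 := hone ⟨i, by omega⟩
      rw [degIn, nbhd_mid h1 (by omega) hn] at h0
      exact h0
    rw [pair_count hne] at hc
    have hiff : ((⟨i - 1, by omega⟩ : Fin n) ∈ M) ↔ ¬ ((⟨i + 1, by omega⟩ : Fin n) ∈ M) := by
      by_cases ha : (⟨i - 1, by omega⟩ : Fin n) ∈ M <;>
        by_cases hb : (⟨i + 1, by omega⟩ : Fin n) ∈ M <;> simp [ha, hb] at hc ⊢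
    constructor
    · rintro ⟨ha', hma⟩
      have hmb := hiff.mp hma
      rintro ⟨hb', hmb'⟩
      exact hmb hmb'
    · intro hb
      refine ⟨by omega, hiff.mpr ?_⟩
      intro hmb
      exact hb ⟨by omega, hmb⟩
  have hodd : ∀ k : ℕ, 2 * k + 1 < n → (xM (2 * k + 1) ↔ k % 2 = 0) := by
    intro k
    induction k with
    | zero => intro _; simpa using x1
    | succ k ih =>
      intro hk
      have hs := hstep (2 * k + 2) (by omega) (by omega)
      have e1 : 2 * k + 2 - 1 = 2 * k + 1 := by omega
      have e2 : 2 * k + 2 + 1 = 2 * (k + 1) + 1 := by omega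
      rw [e1, e2] at hs
      have ihh := ih (by omega)
      by_cases hp : k % 2 = 0
      · have : ¬ xM (2 * (k + 1) + 1) := hs.mp (ihh.mpr hp)
        constructor
        · intro hx; exact absurd hx this
        · intro he; omega
      · have hx : xM (2 * (k + 1) + 1) := by
          by_contra hnx
          exact hp (ihh.mp (hs.mpr hnx))
        constructor
        · intro _; omega
        · intro _; exact hx
  -- conclude
  have hk : 2 * ((n - 2) / 2) + 1 = n - 1 := by omega
  have := hodd ((n - 2) / 2) (by omega)
  rw [hk] at this
  exact hlast (this.mpr (by omega))
lemma count14 (N : ℕ) :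
    (∑ i ∈ Finset.range N, if i % 4 = 1 ∨ i % 4 = 2 then 1 else 0) = (N + 2) / 4 + (N + 1) / 4 := by
  induction N with
  | zero => simp
  | succ N ih => rw [Finset.sum_range_succ, ih]; split_ifs <;> omega

lemma countEnd (hn : 2 ≤ n) (c : Prop) [Decidable c] :
    (∑ i ∈ Finset.range n, if i + 2 = n ∧ c then 1 else 0) = if c then 1 else 0 := by
  by_cases hc : c
  · rw [if_pos hc]
    rw [Finset.sum_eq_single (n - 2)]
    · rw [if_pos ⟨by omega, hc⟩]
    · intro b _ hb
      rw [if_neg]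
      rintro ⟨hb2, -⟩
      omega
    · intro hmem
      exact absurd (Finset.mem_range.mpr (by omega)) hmem
  · simp [hc]

lemma cardM (hn : 2 ≤ n) :
    (Finset.univ.filter (fun v : Fin n =>
        v.val % 4 = 1 ∨ v.val % 4 = 2 ∨ (v.val + 2 = n ∧ (n % 4 = 1 ∨ n % 4 = 2)))).card =
      (n + 2) / 4 + (n + 1) / 4 + (if n % 4 = 1 ∨ n % 4 = 2 then 1 else 0) := by
  rw [Finset.card_filter]
  rw [Fin.sum_univ_eq_sum_range
    (fun i => if i % 4 = 1 ∨ i % 4 = 2 ∨ (i + 2 = n ∧ (n % 4 = 1 ∨ n % 4 = 2)) then 1 else 0)]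
  have hsplit : ∀ i : ℕ,
      (if i % 4 = 1 ∨ i % 4 = 2 ∨ (i + 2 = n ∧ (n % 4 = 1 ∨ n % 4 = 2)) then (1:ℕ) else 0) =
      (if i % 4 = 1 ∨ i % 4 = 2 then 1 else 0) +
      (if i + 2 = n ∧ (n % 4 = 1 ∨ n % 4 = 2) then 1 else 0) := by
    intro i
    split_ifs <;> omega
  rw [Finset.sum_congr rfl (fun i _ => hsplit i), Finset.sum_add_distrib, count14,
    countEnd hn]

lemma ub_mono [DecidableRel (pathGraph n).Adj] (hn : 2 ≤ n) :
    IsKMonopoly (pathGraph n) 0 (Finset.univ.filter (fun v : Fin n =>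
        v.val % 4 = 1 ∨ v.val % 4 = 2 ∨ (v.val + 2 = n ∧ (n % 4 = 1 ∨ n % 4 = 2)))) := by
  rw [mono_iff hn]
  intro v
  have hv := v.isLt
  have key : ∃ j : ℕ, ∃ hj : j < n, ((pathGraph n).Adj v ⟨j, hj⟩) ∧
      (j % 4 = 1 ∨ j % 4 = 2 ∨ (j + 2 = n ∧ (n % 4 = 1 ∨ n % 4 = 2))) := by
    rcases (show v.val % 4 = 0 ∨ v.val % 4 = 1 ∨ v.val % 4 = 2 ∨ v.val % 4 = 3 by omega)
      with h | h | h | h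
    · rcases Nat.lt_or_ge (v.val + 1) n with hlt | hge
      · exact ⟨v.val + 1, hlt, by rw [pathGraph_adj]; exact Or.inl rfl, by omega⟩
      · refine ⟨v.val - 1, by omega, ?_, by omega⟩
        rw [pathGraph_adj]; right; show v.val - 1 + 1 = v.val; omega
    · rcases Nat.lt_or_ge (v.val + 1) n with hlt | hge
      · exact ⟨v.val + 1, hlt, by rw [pathGraph_adj]; exact Or.inl rfl, by omega⟩
      · refine ⟨v.val - 1, by omega, ?_, by omega⟩
        rw [pathGraph_adj]; right; show v.val - 1 + 1 = v.val; omega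
    · refine ⟨v.val - 1, by omega, ?_, by omega⟩
      rw [pathGraph_adj]; right; show v.val - 1 + 1 = v.val; omega
    · refine ⟨v.val - 1, by omega, ?_, by omega⟩
      rw [pathGraph_adj]; right; show v.val - 1 + 1 = v.val; omega
  obtain ⟨j, hj, hadj, hP⟩ := key
  rw [degIn, Nat.succ_le_iff, Finset.card_pos]
  exact ⟨⟨j, hj⟩, Finset.mem_inter.mpr ⟨(mem_neighborFinset _ _ _).mpr hadj,
    Finset.mem_filter.mpr ⟨Finset.mem_univ _, hP⟩⟩⟩

end Aux

theorem stmt16 (n : ℕ) (hn : 2 ≤ n) :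
    monopolyNumber (SimpleGraph.pathGraph n) 0 =
      if n % 4 = 0 then n / 2 else if n % 4 = 2 then (n + 2) / 2 else (n + 1) / 2 := by
  have hmem : (if n % 4 = 0 then n / 2 else if n % 4 = 2 then (n + 2) / 2 else (n + 1) / 2) ∈
      {s : ℕ | ∃ M : Finset (Fin n), IsKMonopoly (SimpleGraph.pathGraph n) 0 M ∧ M.card = s} := by
    refine ⟨_, ub_mono hn, ?_⟩
    rw [cardM hn]
    split_ifs <;> omega
  rw [monopolyNumber]
  apply le_antisymm
  · exact Nat.sInf_le hmem
  · apply le_csInf ⟨_, hmem⟩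
    rintro b ⟨M, hM, rfl⟩
    have h1 := lb1 hn M hM
    have h2 : n % 4 = 2 → n / 2 + 1 ≤ M.card := fun h => lb2 hn h M hM
    split_ifs <;> omega
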